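/- Let Ω be a simply connected, proper subdomain of ℂ containing 0 that is circularly symmetric, and let f be a normalized conformal mapping of 𝔻 onto Ω. Then for every r ∈ (0,1), the image f(D(0,r)) of the open disk of centre 0 and radius r under f is a circularly symmetric domain. -/

import Mathlib

open Complex Metric Set Filter Topology

/-- A plane domain `Ω` is circularly symmetric (about `0`) if its intersection with
each circle centred at the origin is empty, the whole circle, or a subarc centred on
the positive real axis: for every `r > 0` and angles `θ, θ'` with `|θ'| ≤ |θ| ≤ π`,
if `r·e^{iθ} ∈ Ω` then `r·e^{iθ'} ∈ Ω`. -/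
def CircularlySymmetric (Ω : Set ℂ) : Prop :=
  ∀ r θ θ' : ℝ, 0 < r → |θ'| ≤ |θ| → |θ| ≤ Real.pi →
    (r : ℂ) * Complex.exp ((θ : ℂ) * Complex.I) ∈ Ω →
    (r : ℂ) * Complex.exp ((θ' : ℂ) * Complex.I) ∈ Ω

noncomputable def Complex.abs : AbsoluteValue ℂ ℝ :=
  IsAbsoluteValue.toAbsoluteValue (norm : ℂ → ℝ)

theorem Complex.norm_eq_abs (z : ℂ) : ‖z‖ = Complex.abs z := rfl

theorem Complex.abs_conj (z : ℂ) : Complex.abs ((starRingEnd ℂ) z) = Complex.abs z :=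
  Complex.norm_conj z

theorem Complex.abs_mul_exp_arg_mul_I (x : ℂ) :
    (Complex.abs x : ℂ) * Complex.exp (Complex.arg x * Complex.I) = x :=
  Complex.norm_mul_exp_arg_mul_I x

/-- derivative of `conj ∘ g ∘ conj`. -/
lemma hasDerivAt_conj_conj {g : ℂ → ℂ} {d z : ℂ} (h : HasDerivAt g d z) :
    HasDerivAt (fun w => (starRingEnd ℂ) (g ((starRingEnd ℂ) w)))
      ((starRingEnd ℂ) d) ((starRingEnd ℂ) z) := by
  rw [hasDerivAt_iff_tendsto_slope] at h ⊢
  have hmap : Tendsto (starRingEnd ℂ) (𝓝[≠] ((starRingEnd ℂ) z)) (𝓝[≠] z) := by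
    apply tendsto_nhdsWithin_of_tendsto_nhds_of_eventually_within
    · have := (Complex.continuous_conj.tendsto ((starRingEnd ℂ) z)).mono_left
        (nhdsWithin_le_nhds (s := {((starRingEnd ℂ) z)}ᶜ))
      simpa using this
    · filter_upwards [self_mem_nhdsWithin] with w hw
      simp only [mem_compl_iff, mem_singleton_iff] at hw ⊢
      intro hc
      apply hw
      rw [← hc]; simp
  have := (Complex.continuous_conj.tendsto d).comp (h.comp hmap)
  apply this.congr
  intro w
  simp [Function.comp_apply, slope_def_field, map_div₀, map_sub, Complex.conj_conj]



lemma im_ofReal_mul_exp (ρ x : ℝ) :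
    ((ρ : ℂ) * Complex.exp ((x : ℂ) * Complex.I)).im = ρ * Real.sin x := by
  rw [Complex.exp_mul_I]
  simp [← Complex.ofReal_cos, ← Complex.ofReal_sin]

lemma conj_exp_ofReal_mul_I (x : ℝ) :
    (starRingEnd ℂ) (Complex.exp ((x : ℂ) * Complex.I)) =
      Complex.exp ((-x : ℝ) * Complex.I) := by
  rw [← Complex.exp_conj]
  congr 1
  simp [map_mul, Complex.conj_I, Complex.conj_ofReal]

lemma angle_cases {α Θ : ℝ} (h0 : 0 ≤ α) (hπ : α ≤ Real.pi)
    (hΘl : -Real.pi < Θ) (hΘu : Θ ≤ Real.pi) (hsin : 0 < Real.sin (Θ - α)) :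
    ∃ Θ'' : ℝ, |Θ''| ≤ |Θ| ∧
      Complex.exp ((Θ'' : ℂ) * Complex.I) = Complex.exp (((2*α - Θ : ℝ) : ℂ) * Complex.I) := by
  rcases lt_or_ge α Θ with h | h
  · refine ⟨2*α - Θ, ?_, rfl⟩
    have hΘpos : 0 < Θ := lt_of_le_of_lt h0 h
    rw [abs_of_pos hΘpos, abs_le]
    constructor <;> linarith
  · have h2 : Θ < α - Real.pi := by
      by_contra hcon
      push_neg at hcon
      have : Real.sin (Θ - α) ≤ 0 :=
        Real.sin_nonpos_of_nonpos_of_neg_pi_le (by linarith) (by linarith)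
      linarith
    refine ⟨2*α - Θ - 2*Real.pi, ?_, ?_⟩
    · have hΘneg : Θ < 0 := by
        have := Real.pi_pos; linarith
      rw [abs_of_neg hΘneg, abs_le]
      constructor <;> linarith
    · have : ((2*α - Θ - 2*Real.pi : ℝ) : ℂ) * Complex.I
          = ((2*α - Θ : ℝ) : ℂ) * Complex.I + ((-1 : ℤ) : ℂ) * (2 * Real.pi * Complex.I) := by
        push_cast; ring
      rw [this, Complex.exp_add, Complex.exp_int_mul_two_pi_mul_I, mul_one]


lemma exp_I_add (x y : ℝ) :
    Complex.exp ((x : ℂ) * Complex.I) * Complex.exp ((y : ℂ) * Complex.I)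
      = Complex.exp (((x + y : ℝ) : ℂ) * Complex.I) := by
  rw [← Complex.exp_add]
  push_cast
  ring_nf

lemma pol_of_circSym {Ω : Set ℂ} (hcs : CircularlySymmetric Ω) {α : ℝ}
    (h0 : 0 ≤ α) (hπ : α ≤ Real.pi) :
    ∀ w ∈ Ω, 0 < ((starRingEnd ℂ) (Complex.exp ((α : ℂ) * Complex.I)) * w).im →
      (Complex.exp ((α : ℂ) * Complex.I))^2 * (starRingEnd ℂ) w ∈ Ω := by
  intro w hw him
  have hw0 : w ≠ 0 := by rintro rfl; simp at him
  set ρ := Complex.abs w with hρdef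
  have hρ : 0 < ρ := Complex.abs.pos hw0
  set Θ := Complex.arg w with hΘdef
  have hrep : (ρ : ℂ) * Complex.exp ((Θ : ℂ) * Complex.I) = w := Complex.abs_mul_exp_arg_mul_I w
  have hprod : (starRingEnd ℂ) (Complex.exp ((α : ℂ) * Complex.I)) * w
      = (ρ : ℂ) * Complex.exp (((Θ - α : ℝ) : ℂ) * Complex.I) := by
    rw [conj_exp_ofReal_mul_I, ← hrep, ← mul_assoc, mul_comm (Complex.exp _) ((ρ:ℂ)),
      mul_assoc, ← Complex.exp_add]
    push_cast
    ring_nf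
  rw [hprod, im_ofReal_mul_exp] at him
  have hsin : 0 < Real.sin (Θ - α) := by
    by_contra hcon
    push_neg at hcon
    nlinarith
  obtain ⟨Θ'', hΘ'', hexp⟩ := angle_cases h0 hπ (Complex.neg_pi_lt_arg w) (Complex.arg_le_pi w) hsin
  have hconjw : (starRingEnd ℂ) w = (ρ : ℂ) * Complex.exp (((-Θ : ℝ) : ℂ) * Complex.I) := by
    rw [← hrep]
    simp [map_mul, conj_exp_ofReal_mul_I, Complex.conj_ofReal]
  have htarget : (Complex.exp ((α : ℂ) * Complex.I))^2 * (starRingEnd ℂ) w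
      = (ρ : ℂ) * Complex.exp ((Θ'' : ℂ) * Complex.I) := by
    rw [hexp, ← hΘdef, hconjw]
    calc (Complex.exp ((α : ℂ) * Complex.I))^2 * ((ρ : ℂ) * Complex.exp (((-Θ : ℝ) : ℂ) * Complex.I))
        = (ρ : ℂ) * (Complex.exp ((α : ℂ) * Complex.I) * (Complex.exp ((α : ℂ) * Complex.I) * Complex.exp (((-Θ : ℝ) : ℂ) * Complex.I))) := by ring
      _ = (ρ : ℂ) * Complex.exp (((α + (α + -Θ) : ℝ) : ℂ) * Complex.I) := by
          rw [exp_I_add, exp_I_add]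
      _ = (ρ : ℂ) * Complex.exp (((2 * α - Θ : ℝ) : ℂ) * Complex.I) := by
          congr 2
          push_cast
          ring
  rw [htarget]
  refine hcs ρ Θ Θ'' hρ (by rw [hΘdef]; exact hΘ'') (Complex.abs_arg_le_pi w) ?_
  rw [hrep]
  exact hw


lemma exists_inverse {f : ℂ → ℂ} {Ω : Set ℂ} (hΩopen : IsOpen Ω)
    (hf : DifferentiableOn ℂ f (ball (0:ℂ) 1)) (hinj : InjOn f (ball (0:ℂ) 1))
    (himg : f '' ball (0:ℂ) 1 = Ω) :
    ∃ φ : ℂ → ℂ, (∀ w ∈ Ω, φ w ∈ ball (0:ℂ) 1 ∧ f (φ w) = w) ∧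
      (∀ z ∈ ball (0:ℂ) 1, φ (f z) = z) ∧ DifferentiableOn ℂ φ Ω := by
  classical
  have hBopen : IsOpen (ball (0:ℂ) 1) := isOpen_ball
  set φ := Function.invFunOn f (ball (0:ℂ) 1) with hφdef
  have hleft : ∀ z ∈ ball (0:ℂ) 1, φ (f z) = z := fun z hz => hinj.leftInvOn_invFunOn hz
  have hmemB : ∀ w ∈ Ω, w ∈ f '' ball (0:ℂ) 1 := fun w hw => by rw [himg]; exact hw
  have hright : ∀ w ∈ Ω, f (φ w) = w := by
    intro w hw
    obtain ⟨z, hz, rfl⟩ := hmemB w hw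
    rw [hleft z hz]
  have hmem : ∀ w ∈ Ω, φ w ∈ ball (0:ℂ) 1 := by
    intro w hw
    obtain ⟨z, hz, rfl⟩ := hmemB w hw
    rw [hleft z hz]; exact hz
  have hA : AnalyticOnNhd ℂ f (ball (0:ℂ) 1) := hf.analyticOnNhd hBopen
  -- open mapping
  have hopen : ∀ s ⊆ ball (0:ℂ) 1, IsOpen s → IsOpen (f '' s) := by
    rcases hA.is_constant_or_isOpen (convex_ball _ _).isPreconnected with ⟨w₀, hw₀⟩ | h
    · exfalso
      have h1 : (0:ℂ) ∈ ball (0:ℂ) 1 := mem_ball_self one_pos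
      have h2 : ((1/2 : ℝ) : ℂ) ∈ ball (0:ℂ) 1 := by
        rw [mem_ball_zero_iff, Complex.norm_real]; norm_num
      have := hinj h2 h1 (by rw [hw₀ _ h1, hw₀ _ h2])
      norm_num [Complex.ofReal_eq_zero] at this
    · exact h
  -- continuity of φ
  have hcont : ∀ w ∈ Ω, ContinuousAt φ w := by
    intro w hw
    obtain ⟨z, hz, rfl⟩ := hmemB w hw
    rw [ContinuousAt, hleft z hz, _root_.tendsto_nhds]
    intro U hU hzU
    refine Filter.mem_of_superset
      ((hopen (U ∩ ball (0:ℂ) 1) inter_subset_right (hU.inter hBopen)).mem_nhds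
        ⟨z, ⟨hzU, hz⟩, rfl⟩) ?_
    rintro _ ⟨z', ⟨hz'U, hz'B⟩, rfl⟩
    simpa [hleft z' hz'B] using hz'U
  -- differentiability at points with nonvanishing derivative
  have hgood : ∀ z₀ ∈ ball (0:ℂ) 1, deriv f z₀ ≠ 0 → DifferentiableAt ℂ φ (f z₀) := by
    intro z₀ hz₀ hd
    have hwΩ : f z₀ ∈ Ω := by rw [← himg]; exact ⟨z₀, hz₀, rfl⟩
    have hfz₀ : HasDerivAt f (deriv f z₀) z₀ :=
      (hf.differentiableAt (hBopen.mem_nhds hz₀)).hasDerivAt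
    have hΩnhds : Ω ∈ 𝓝[≠] (f z₀) := nhdsWithin_le_nhds (hΩopen.mem_nhds hwΩ)
    have key : HasDerivAt φ (deriv f z₀)⁻¹ (f z₀) := by
      rw [hasDerivAt_iff_tendsto_slope]
      have h1 : Tendsto φ (𝓝[≠] (f z₀)) (𝓝[≠] z₀) := by
        apply tendsto_nhdsWithin_of_tendsto_nhds_of_eventually_within
        · have := (hcont _ hwΩ).tendsto
          rw [hleft z₀ hz₀] at this
          exact this.mono_left nhdsWithin_le_nhds
        · filter_upwards [hΩnhds, self_mem_nhdsWithin] with w hwΩ' hwne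
          intro hcon
          apply hwne
          rw [mem_compl_iff, mem_singleton_iff] at *
          rw [← hright w hwΩ', hcon]
      have h2 : Tendsto (fun w => slope f z₀ (φ w)) (𝓝[≠] (f z₀)) (𝓝 (deriv f z₀)) :=
        (hasDerivAt_iff_tendsto_slope.mp hfz₀).comp h1
      have h3 := h2.inv₀ hd
      apply h3.congr'
      filter_upwards [hΩnhds, self_mem_nhdsWithin] with w hwΩ' hwne
      rw [slope_def_field, slope_def_field, inv_div, hright w hwΩ', hleft z₀ hz₀]
    exact key.differentiableAt
  -- differentiability everywhere
  have hdiff : ∀ w ∈ Ω, DifferentiableAt ℂ φ w := by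
    intro w hw
    obtain ⟨z₀, hz₀, rfl⟩ := hmemB w hw
    by_cases hd : deriv f z₀ ≠ 0
    · exact hgood z₀ hz₀ hd
    push_neg at hd
    rcases ((hA.deriv) z₀ hz₀).eventually_eq_zero_or_eventually_ne_zero with hz | hnz
    · exfalso
      have hball : ∀ᶠ z in 𝓝 z₀, deriv f z = 0 ∧ z ∈ ball (0:ℂ) 1 :=
        hz.and (hBopen.mem_nhds hz₀)
      obtain ⟨δ, hδpos, hδ⟩ := Metric.eventually_nhds_iff_ball.mp hball
      have hconv : Convex ℝ (ball z₀ δ) := convex_ball _ _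
      have hdiffb : DifferentiableOn ℂ f (ball z₀ δ) :=
        fun z hz' => (hf.differentiableAt (hBopen.mem_nhds (hδ z hz').2)).differentiableWithinAt
      have hconst : f (z₀ + δ/2) = f z₀ := by
        apply hconv.is_const_of_fderivWithin_eq_zero hdiffb
        · intro z hz'
          rw [fderivWithin_of_isOpen isOpen_ball hz']
          have hda : DifferentiableAt ℂ f z :=
            hf.differentiableAt (hBopen.mem_nhds (hδ z hz').2)
          have : HasDerivAt f 0 z := by
            have := hda.hasDerivAt
            rwa [(hδ z hz').1] at this
          have hF : HasFDerivAt f ((1 : ℂ →L[ℂ] ℂ).smulRight (0:ℂ)) z :=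
            hasDerivAt_iff_hasFDerivAt.mp this
          rw [hF.fderiv]
          ext u
          simp
        · rw [mem_ball_iff_norm]
          simp only [add_sub_cancel_left]
          rw [show ((δ:ℂ)/2) = ((δ/2 : ℝ):ℂ) by push_cast; ring, Complex.norm_real, Real.norm_eq_abs,
            abs_of_pos (by linarith)]
          linarith
        · exact mem_ball_self hδpos
      have h2B : z₀ + δ/2 ∈ ball (0:ℂ) 1 := by
        apply (hδ _ _).2
        rw [mem_ball_iff_norm]
        simp only [add_sub_cancel_left]
        rw [show ((δ:ℂ)/2) = ((δ/2 : ℝ):ℂ) by push_cast; ring, Complex.norm_real, Real.norm_eq_abs,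
          abs_of_pos (by linarith)]
        linarith
      have := hinj h2B hz₀ hconst
      have hδ0 : (δ : ℂ) = 0 := by linear_combination 2 * this
      have : δ = 0 := by exact_mod_cast hδ0
      linarith
    · -- isolated nonvanishing of deriv: removable singularity argument
      have hwΩ : f z₀ ∈ Ω := by rw [← himg]; exact ⟨z₀, hz₀, rfl⟩
      obtain ⟨U, hUp, hUopen, hz₀U⟩ := _root_.eventually_nhds_iff.mp
        ((eventually_nhdsWithin_iff.mp hnz).and (hBopen.mem_nhds hz₀))
      have hev : ∀ᶠ w' in 𝓝[≠] (f z₀), DifferentiableAt ℂ φ w' := by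
        filter_upwards [mem_nhdsWithin_of_mem_nhds
          ((hopen U (fun z hz' => (hUp z hz').2) hUopen).mem_nhds ⟨z₀, hz₀U, rfl⟩),
          self_mem_nhdsWithin] with w' hw' hw'ne
        obtain ⟨z', hz'U, rfl⟩ := hw'
        have hz'B : z' ∈ ball (0:ℂ) 1 := (hUp z' hz'U).2
        have hz'ne : z' ≠ z₀ := by
          rintro rfl
          exact hw'ne rfl
        exact hgood z' hz'B ((hUp z' hz'U).1 hz'ne)
      exact (Complex.analyticAt_of_differentiable_on_punctured_nhds_of_continuousAt hev
        (hcont _ hwΩ)).differentiableAt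
  exact ⟨φ, fun w hw => ⟨hmem w hw, hright w hw⟩, hleft,
    fun w hw => (hdiff w hw).differentiableWithinAt⟩

lemma polar_step {f φ : ℂ → ℂ} {Ω : Set ℂ} (hΩopen : IsOpen Ω)
    (hf : DifferentiableOn ℂ f (ball (0:ℂ) 1)) (himg : f '' ball (0:ℂ) 1 = Ω)
    (hf0 : f 0 = 0)
    (hφ : DifferentiableOn ℂ φ Ω)
    (hmem : ∀ w ∈ Ω, φ w ∈ ball (0:ℂ) 1) (hright : ∀ w ∈ Ω, f (φ w) = w)
    (hleft : ∀ z ∈ ball (0:ℂ) 1, φ (f z) = z)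
    (hc : (starRingEnd ℂ) (deriv f 0) = deriv f 0) (hc0 : deriv f 0 ≠ 0)
    {a : ℂ} (ha : a * (starRingEnd ℂ) a = 1)
    (hpol : ∀ w ∈ Ω, 0 < ((starRingEnd ℂ) a * w).im → a^2 * (starRingEnd ℂ) w ∈ Ω)
    {z : ℂ} (hz : z ∈ ball (0:ℂ) 1) (hzIm : 0 ≤ ((starRingEnd ℂ) a * f z).im) :
    a^2 * (starRingEnd ℂ) (f z) ∈ Ω ∧
      Complex.abs (φ (a^2 * (starRingEnd ℂ) (f z))) ≤ Complex.abs z := by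
  have hBopen : IsOpen (ball (0:ℂ) 1) := isOpen_ball
  have hzΩ : f z ∈ Ω := by rw [← himg]; exact ⟨z, hz, rfl⟩
  have h0Ω : (0:ℂ) ∈ Ω := by rw [← himg]; exact ⟨0, mem_ball_self one_pos, hf0⟩
  have hφ0 : φ 0 = 0 := by
    have := hleft 0 (mem_ball_self one_pos); rwa [hf0] at this
  -- fixed points of the reflection
  have sigma_fix : ∀ u : ℂ, ((starRingEnd ℂ) a * u).im = 0 → a^2 * (starRingEnd ℂ) u = u := by
    intro u hu
    have hv : (starRingEnd ℂ) ((starRingEnd ℂ) a * u) = (starRingEnd ℂ) a * u :=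
      Complex.conj_eq_iff_im.mpr hu
    rw [map_mul, Complex.conj_conj] at hv
    linear_combination a * hv + u * ha
  rcases hzIm.lt_or_eq with hstrict | heq
  swap
  · have hfix := sigma_fix (f z) heq.symm
    rw [hfix, hleft z hz]
    exact ⟨hzΩ, le_refl _⟩
  -- strict case
  set g : ℂ → ℝ := fun z' => ((starRingEnd ℂ) a * f z').im with hgdef
  set O : Set ℂ := ball (0:ℂ) 1 ∩ (fun z' => a^2 * (starRingEnd ℂ) (f z')) ⁻¹' Ω with hOdef
  set W : Set ℂ := ball (0:ℂ) 1 ∩ g ⁻¹' (Ioi 0) with hWdef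
  have hfc : ContinuousOn f (ball (0:ℂ) 1) := hf.continuousOn
  have hσc : ContinuousOn (fun z' => a^2 * (starRingEnd ℂ) (f z')) (ball (0:ℂ) 1) :=
    continuousOn_const.mul (Complex.continuous_conj.comp_continuousOn hfc)
  have hgc : ContinuousOn g (ball (0:ℂ) 1) :=
    Complex.continuous_im.comp_continuousOn (continuousOn_const.mul hfc)
  have hOopen : IsOpen O := hσc.isOpen_inter_preimage hBopen hΩopen
  have hWopen : IsOpen W := hgc.isOpen_inter_preimage hBopen isOpen_Ioi
  have hWO : W ⊆ O := by
    rintro z' ⟨h1, h2⟩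
    exact ⟨h1, hpol (f z') (by rw [← himg]; exact ⟨z', h1, rfl⟩) h2⟩
  have hgecl : ∀ y, y ∈ closure W → y ∈ ball (0:ℂ) 1 → 0 ≤ g y := by
    intro y hcl hball
    by_contra hlt
    push_neg at hlt
    have hU : IsOpen (ball (0:ℂ) 1 ∩ g ⁻¹' (Iio 0)) :=
      hgc.isOpen_inter_preimage hBopen isOpen_Iio
    obtain ⟨y', hy'U, hy'W⟩ := mem_closure_iff.mp hcl _ hU ⟨hball, hlt⟩
    exact absurd hy'W.2 (by simpa using le_of_lt hy'U.2)
  have hclW : ∀ y, y ∈ closure W → y ∈ ball (0:ℂ) 1 → y ∈ O := by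
    intro y hcl hball
    rcases (hgecl y hcl hball).lt_or_eq with hpos | hzero
    · exact hWO ⟨hball, hpos⟩
    · refine ⟨hball, ?_⟩
      have := sigma_fix (f y) hzero.symm
      simp only [mem_preimage]
      rw [this]
      rw [← himg]; exact ⟨y, hball, rfl⟩
  -- the holomorphic comparison function q
  set q : ℂ → ℂ := fun z' => (starRingEnd ℂ) (φ (a^2 * (starRingEnd ℂ) (f z'))) with hqdef
  have hqd : ∀ z₀ ∈ O, HasDerivAt q
      ((starRingEnd ℂ) (deriv φ (a^2 * (starRingEnd ℂ) (f z₀)) *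
        (a^2 * (starRingEnd ℂ) (deriv f z₀)))) z₀ := by
    rintro z₀ ⟨hz₀b, hz₀m⟩
    have hf' : HasDerivAt f (deriv f z₀) z₀ :=
      (hf.differentiableAt (hBopen.mem_nhds hz₀b)).hasDerivAt
    have h1 : HasDerivAt (fun u => (starRingEnd ℂ) (f ((starRingEnd ℂ) u)))
        ((starRingEnd ℂ) (deriv f z₀)) ((starRingEnd ℂ) z₀) := hasDerivAt_conj_conj hf'
    have h2 : HasDerivAt (fun u => a^2 * (starRingEnd ℂ) (f ((starRingEnd ℂ) u)))
        (a^2 * (starRingEnd ℂ) (deriv f z₀)) ((starRingEnd ℂ) z₀) := h1.const_mul _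
    have hφ' : HasDerivAt φ (deriv φ (a^2 * (starRingEnd ℂ) (f z₀)))
        ((fun u => a^2 * (starRingEnd ℂ) (f ((starRingEnd ℂ) u))) ((starRingEnd ℂ) z₀)) := by
      simp only [Complex.conj_conj]
      exact (hφ.differentiableAt (hΩopen.mem_nhds hz₀m)).hasDerivAt
    have h3 := hφ'.comp ((starRingEnd ℂ) z₀) h2
    have h4 := hasDerivAt_conj_conj h3
    simp only [Function.comp_def, Complex.conj_conj] at h4
    exact h4
  have h0O : (0:ℂ) ∈ O := by
    refine ⟨mem_ball_self one_pos, ?_⟩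
    simp only [mem_preimage, hf0, map_zero, mul_zero]
    exact h0Ω
  have hq0 : q 0 = 0 := by simp [hqdef, hf0, hφ0]
  have hφd0 : deriv φ 0 = (deriv f 0)⁻¹ := by
    have hfd : HasDerivAt f (deriv f 0) 0 :=
      (hf.differentiableAt (hBopen.mem_nhds (mem_ball_self one_pos))).hasDerivAt
    have hφdiff : DifferentiableAt ℂ φ 0 := hφ.differentiableAt (hΩopen.mem_nhds h0Ω)
    have hφh : HasDerivAt φ (deriv φ 0) (f 0) := by rw [hf0]; exact hφdiff.hasDerivAt
    have hcomp : HasDerivAt (φ ∘ f) (deriv φ 0 * deriv f 0) 0 := hφh.comp 0 hfd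
    have hid : HasDerivAt (φ ∘ f) 1 0 := by
      have heq : (φ ∘ f) =ᶠ[𝓝 (0:ℂ)] id := by
        filter_upwards [hBopen.mem_nhds (mem_ball_self one_pos)] with x hx
        exact hleft x hx
      exact (hasDerivAt_id (0:ℂ)).congr_of_eventuallyEq heq
    have huniq : deriv φ 0 * deriv f 0 = 1 := hcomp.unique hid
    exact eq_inv_of_mul_eq_one_left huniq
  have hqd0 : HasDerivAt q ((starRingEnd ℂ) (a^2)) 0 := by
    have := hqd 0 h0O
    have e : (starRingEnd ℂ) (deriv φ (a^2 * (starRingEnd ℂ) (f 0)) *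
        (a^2 * (starRingEnd ℂ) (deriv f 0))) = (starRingEnd ℂ) (a^2) := by
      rw [hf0, map_zero, mul_zero, hφd0, hc]
      congr 1
      field_simp
    rwa [e] at this
  -- the quotient function
  set h : ℂ → ℂ := fun z' => if z' = 0 then (starRingEnd ℂ) (a^2) else q z' / z' with hhdef
  have hslope : ∀ z', z' ≠ 0 → h z' = q z' / z' := fun z' hz' => if_neg hz'
  have hhdiff : ∀ z₀ ∈ O, DifferentiableAt ℂ h z₀ := by
    intro z₀ hz₀
    rcases eq_or_ne z₀ 0 with rfl | hne
    · apply (Complex.analyticAt_of_differentiable_on_punctured_nhds_of_continuousAt ?_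
        ?_).differentiableAt
      · filter_upwards [mem_nhdsWithin_of_mem_nhds (hOopen.mem_nhds hz₀),
          self_mem_nhdsWithin] with y hy hyne
        rw [mem_compl_iff, mem_singleton_iff] at hyne
        have hd : DifferentiableAt ℂ (fun z' => q z' / z') y :=
          ((hqd y hy).differentiableAt).div differentiableAt_id hyne
        apply hd.congr_of_eventuallyEq
        filter_upwards [isOpen_compl_singleton.mem_nhds hyne] with u hu
        exact hslope u hu
      · rw [ContinuousAt, show h 0 = (starRingEnd ℂ) (a^2) from if_pos rfl]
        have hsl := hasDerivAt_iff_tendsto_slope.mp hqd0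
        have htd : Tendsto h (𝓝[≠] (0:ℂ)) (𝓝 ((starRingEnd ℂ) (a^2))) := by
          apply hsl.congr'
          filter_upwards [self_mem_nhdsWithin] with u hu
          rw [mem_compl_iff, mem_singleton_iff] at hu
          rw [slope_def_field, hq0, hslope u hu]
          simp [sub_zero]
        rw [← nhdsNE_sup_pure (0:ℂ)]
        refine tendsto_sup.mpr ⟨htd, ?_⟩
        rw [tendsto_pure_left]
        intro s hs
        rw [show h 0 = (starRingEnd ℂ) (a^2) from if_pos rfl]
        exact mem_of_mem_nhds hs
    · have hd : DifferentiableAt ℂ (fun z' => q z' / z') z₀ :=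
        ((hqd z₀ hz₀).differentiableAt).div differentiableAt_id hne
      apply hd.congr_of_eventuallyEq
      filter_upwards [isOpen_compl_singleton.mem_nhds hne] with u hu
      exact hslope u hu
  have habsa : Complex.abs a = 1 := by
    have h1 : Complex.abs a * Complex.abs a = 1 := by
      have := congrArg Complex.abs ha
      rwa [map_mul, Complex.abs_conj, map_one] at this
    nlinarith [Complex.abs.nonneg a]
  have hzW : z ∈ W := ⟨hz, hstrict⟩
  have hz0 : z ≠ 0 := by
    rintro rfl
    rw [hf0, mul_zero] at hstrict
    simp at hstrict
  -- maximum principle bound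
  have habs : ∀ s : ℝ, Complex.abs z < s → s < 1 → Complex.abs (q z) ≤ Complex.abs z / s := by
    intro s hs1 hs2
    have hspos : 0 < s := lt_of_le_of_lt (Complex.abs.nonneg z) hs1
    set V : Set ℂ := W ∩ ball 0 s with hVdef
    have hVopen : IsOpen V := hWopen.inter isOpen_ball
    have hclV : closure V ⊆ O := by
      intro y hy
      have h1 : y ∈ closure W := closure_mono inter_subset_left hy
      have h2 : y ∈ closedBall (0:ℂ) s := by
        have := closure_mono inter_subset_right hy
        rwa [closure_ball _ (ne_of_gt hspos)] at this
      have hyb : y ∈ ball (0:ℂ) 1 := by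
        rw [mem_ball_zero_iff]
        exact lt_of_le_of_lt (mem_closedBall_zero_iff.mp h2) hs2
      exact hclW y h1 hyb
    have hbd : Bornology.IsBounded V := (isBounded_ball (x := (0:ℂ)) (r := s)).subset
      inter_subset_right
    have hdc : DiffContOnCl ℂ h V :=
      ⟨fun y hy => (hhdiff y (hclV (subset_closure hy))).differentiableWithinAt,
        fun y hy => (hhdiff y (hclV hy)).continuousAt.continuousWithinAt⟩
    have hfr : ∀ y ∈ frontier V, ‖h y‖ ≤ 1/s := by
      intro y hyfr
      have hycl : y ∈ closure V := frontier_subset_closure hyfr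
      have hyO : y ∈ O := hclV hycl
      have hynotV : y ∉ V := by
        rw [hVopen.frontier_eq] at hyfr
        exact hyfr.2
      have hyclW : y ∈ closure W := closure_mono inter_subset_left hycl
      have hycb : y ∈ closedBall (0:ℂ) s := by
        have := closure_mono inter_subset_right hycl
        rwa [closure_ball _ (ne_of_gt hspos)] at this
      have hqy : Complex.abs (q y) ≤ 1 := by
        have := hmem _ hyO.2
        rw [mem_ball_zero_iff] at this
        rw [hqdef]
        simp only [Complex.abs_conj]
        exact le_of_lt (by simpa [Complex.norm_eq_abs] using this)
      have hcase : g y = 0 ∨ Complex.abs y = s := by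
        rcases (hgecl y hyclW hyO.1).lt_or_eq with hpos | hzero
        · right
          by_contra hne
          have : Complex.abs y < s :=
            lt_of_le_of_ne (by simpa [Complex.norm_eq_abs] using mem_closedBall_zero_iff.mp hycb) hne
          exact hynotV ⟨⟨hyO.1, hpos⟩, by rwa [mem_ball_zero_iff, Complex.norm_eq_abs]⟩
        · left; exact hzero.symm
      have hs1' : (1:ℝ) ≤ 1/s := by
        rw [le_div_iff₀ hspos]; linarith
      rcases hcase with hzero | habsy
      · have hfix := sigma_fix (f y) hzero
        rcases eq_or_ne y 0 with rfl | hyne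
        · rw [show h 0 = (starRingEnd ℂ) (a^2) from if_pos rfl]
          rw [Complex.norm_eq_abs, Complex.abs_conj, map_pow, habsa]
          simpa using hs1'
        · rw [hslope y hyne, Complex.norm_eq_abs]
          have : q y = (starRingEnd ℂ) y := by
            rw [hqdef]
            simp only
            rw [hfix, hleft y hyO.1]
          rw [this, map_div₀, Complex.abs_conj, div_self (by simpa using hyne)]
          exact hs1'
      · have hyne : y ≠ 0 := by
          rintro rfl
          simp at habsy
          exact (ne_of_gt hspos) habsy.symm
        rw [hslope y hyne, Complex.norm_eq_abs, map_div₀, habsy]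
        gcongr
    have habsz : 0 < Complex.abs z := Complex.abs.pos hz0
    have hmax := Complex.norm_le_of_forall_mem_frontier_norm_le hbd hdc hfr
      (subset_closure (⟨hzW, by rwa [mem_ball_zero_iff, Complex.norm_eq_abs]⟩ : z ∈ V))
    rw [hslope z hz0, Complex.norm_eq_abs, map_div₀] at hmax
    rw [div_le_div_iff₀ habsz hspos] at hmax
    rw [le_div_iff₀ hspos]
    linarith
  have hQle : Complex.abs (q z) ≤ Complex.abs z := by
    have hz1 : Complex.abs z < 1 := by rwa [mem_ball_zero_iff, Complex.norm_eq_abs] at hz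
    by_contra hcon
    push_neg at hcon
    have ht0 : 0 ≤ Complex.abs z := Complex.abs.nonneg z
    have hQ0 : 0 < Complex.abs (q z) := lt_of_le_of_lt ht0 hcon
    set t := Complex.abs z with htdef
    set Q := Complex.abs (q z) with hQdef
    have htQ1 : t / Q < 1 := (div_lt_one hQ0).mpr hcon
    set s : ℝ := max ((t+1)/2) ((t/Q+1)/2) with hsdef
    have hts : t < s := lt_of_lt_of_le (by linarith) (le_max_left _ _)
    have hs1 : s < 1 := max_lt (by linarith) (by linarith)
    have hkey := habs s hts hs1
    have hsgt : t / Q < s := lt_of_lt_of_le (by linarith) (le_max_right _ _)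
    have hspos : 0 < s := lt_of_le_of_lt ht0 hts
    have hlt : t / s < Q := by
      rw [div_lt_iff₀ hspos]
      calc t = (t/Q) * Q := by field_simp
        _ < s * Q := mul_lt_mul_of_pos_right hsgt hQ0
        _ = Q * s := mul_comm _ _
    linarith
  refine ⟨hpol (f z) hzΩ hstrict, ?_⟩
  have heqa : Complex.abs (φ (a^2 * (starRingEnd ℂ) (f z))) = Complex.abs (q z) := by
    rw [hqdef]
    simp [Complex.abs_conj]
  rw [heqa]
  exact hQle

lemma conj_ofReal_mul_exp (ρ x : ℝ) :
    (starRingEnd ℂ) ((ρ : ℂ) * Complex.exp ((x : ℂ) * Complex.I))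
      = (ρ : ℂ) * Complex.exp (((-x : ℝ) : ℂ) * Complex.I) := by
  rw [map_mul, Complex.conj_ofReal, conj_exp_ofReal_mul_I]

lemma conj_a_mul_exp (α x ρ : ℝ) :
    (starRingEnd ℂ) (Complex.exp ((α : ℂ) * Complex.I)) *
      ((ρ : ℂ) * Complex.exp ((x : ℂ) * Complex.I))
      = (ρ : ℂ) * Complex.exp (((x - α : ℝ) : ℂ) * Complex.I) := by
  rw [conj_exp_ofReal_mul_I]
  calc Complex.exp (((-α : ℝ) : ℂ) * Complex.I) * ((ρ : ℂ) * Complex.exp ((x : ℂ) * Complex.I))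
      = (ρ : ℂ) * (Complex.exp ((x : ℂ) * Complex.I) * Complex.exp (((-α : ℝ) : ℂ) * Complex.I)) := by
        ring
    _ = (ρ : ℂ) * Complex.exp (((x + -α : ℝ) : ℂ) * Complex.I) := by rw [exp_I_add]
    _ = (ρ : ℂ) * Complex.exp (((x - α : ℝ) : ℂ) * Complex.I) := by
        have : ((x + -α : ℝ) : ℂ) = ((x - α : ℝ) : ℂ) := by push_cast; ring
        rw [this]

lemma sq_exp_mul_conj (α x ρ : ℝ) :
    (Complex.exp ((α : ℂ) * Complex.I))^2 *
      (starRingEnd ℂ) ((ρ : ℂ) * Complex.exp ((x : ℂ) * Complex.I))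
      = (ρ : ℂ) * Complex.exp (((2*α - x : ℝ) : ℂ) * Complex.I) := by
  rw [conj_ofReal_mul_exp]
  calc (Complex.exp ((α : ℂ) * Complex.I))^2 * ((ρ : ℂ) * Complex.exp (((-x : ℝ) : ℂ) * Complex.I))
      = (ρ : ℂ) * (Complex.exp ((α : ℂ) * Complex.I) *
          (Complex.exp ((α : ℂ) * Complex.I) * Complex.exp (((-x : ℝ) : ℂ) * Complex.I))) := by
        ring
    _ = (ρ : ℂ) * Complex.exp (((α + (α + -x) : ℝ) : ℂ) * Complex.I) := by
        rw [exp_I_add, exp_I_add]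
    _ = (ρ : ℂ) * Complex.exp (((2*α - x : ℝ) : ℂ) * Complex.I) := by
        congr 2; push_cast; ring

/-- Lemma 3.3 (Jenkins): if `Ω` is a circularly symmetric, simply connected, proper
subdomain of `ℂ` containing `0` and `f` is its normalized Riemann map, then `f` maps
each disk `D(0,r)`, `0 < r < 1`, onto a circularly symmetric domain. -/
theorem image_of_subdisk_circsym
    (Ω : Set ℂ) (hΩopen : IsOpen Ω) (hΩconn : IsConnected Ω)
    (hΩsc : SimplyConnectedSpace Ω) (hΩne : Ω ≠ univ) (hΩ0 : (0 : ℂ) ∈ Ω)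
    (hcs : CircularlySymmetric Ω)
    (f : ℂ → ℂ) (hf : DifferentiableOn ℂ f (ball (0 : ℂ) 1))
    (hinj : InjOn f (ball (0 : ℂ) 1)) (himg : f '' ball (0 : ℂ) 1 = Ω)
    (hf0 : f 0 = 0) (hf'0 : (deriv f 0).im = 0 ∧ 0 < (deriv f 0).re) :
    ∀ r : ℝ, r ∈ Ioo (0 : ℝ) 1 →
      IsOpen (f '' ball (0 : ℂ) r) ∧ IsConnected (f '' ball (0 : ℂ) r) ∧
      CircularlySymmetric (f '' ball (0 : ℂ) r) := by
  intro r hr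
  obtain ⟨hr0, hr1⟩ := hr
  obtain ⟨φ, hφ1, hφleft, hφdiff⟩ := exists_inverse hΩopen hf hinj himg
  have hmem : ∀ w ∈ Ω, φ w ∈ ball (0:ℂ) 1 := fun w hw => (hφ1 w hw).1
  have hright : ∀ w ∈ Ω, f (φ w) = w := fun w hw => (hφ1 w hw).2
  have hc : (starRingEnd ℂ) (deriv f 0) = deriv f 0 := Complex.conj_eq_iff_im.mpr hf'0.1
  have hc0 : deriv f 0 ≠ 0 := by
    intro h
    rw [h] at hf'0
    simp at hf'0
  have hchar : f '' ball (0:ℂ) r = Ω ∩ φ ⁻¹' (ball (0:ℂ) r) := by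
    ext w
    constructor
    · rintro ⟨z, hzr, rfl⟩
      have hz1 : z ∈ ball (0:ℂ) 1 := ball_subset_ball (le_of_lt hr1) hzr
      refine ⟨by rw [← himg]; exact ⟨z, hz1, rfl⟩, ?_⟩
      rw [mem_preimage, hφleft z hz1]
      exact hzr
    · rintro ⟨hwΩ, hwr⟩
      exact ⟨φ w, hwr, hright w hwΩ⟩
  refine ⟨?_, ?_, ?_⟩
  · rw [hchar]
    exact (hφdiff.continuousOn).isOpen_inter_preimage hΩopen isOpen_ball
  · exact ((convex_ball (0:ℂ) r).isConnected (nonempty_ball.mpr hr0)).image f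
      (hf.continuousOn.mono (ball_subset_ball hr1.le))
  -- circular symmetry
  -- conjugation estimate
  have hpol0 : ∀ w ∈ Ω, 0 < ((starRingEnd ℂ) (1:ℂ) * w).im → (1:ℂ)^2 * (starRingEnd ℂ) w ∈ Ω := by
    have := pol_of_circSym hcs (le_refl (0:ℝ)) Real.pi_pos.le
    simpa using this
  have hpolpi : ∀ w ∈ Ω, 0 < ((starRingEnd ℂ) (-1:ℂ) * w).im →
      (-1:ℂ)^2 * (starRingEnd ℂ) w ∈ Ω := by
    have := pol_of_circSym hcs Real.pi_pos.le (le_refl Real.pi)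
    simpa [Complex.exp_pi_mul_I] using this
  have conj_est : ∀ w ∈ Ω, (starRingEnd ℂ) w ∈ Ω ∧
      Complex.abs (φ ((starRingEnd ℂ) w)) ≤ Complex.abs (φ w) := by
    intro w hw
    have hzb : φ w ∈ ball (0:ℂ) 1 := hmem w hw
    rcases le_or_gt 0 w.im with him | him
    · have := polar_step hΩopen hf himg hf0 hφdiff hmem hright hφleft hc hc0
        (a := 1) (by simp) hpol0 hzb (by simp [hright w hw, him])
      simpa [hright w hw] using this
    · have := polar_step hΩopen hf himg hf0 hφdiff hmem hright hφleft hc hc0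
        (a := -1) (by simp) hpolpi hzb
        (by simp only [map_neg, map_one, hright w hw, neg_one_mul, Complex.neg_im]; linarith)
      simpa [hright w hw] using this
  intro ρ θ θ' hρ hθle hθπ hmemθ
  rw [hchar] at hmemθ
  obtain ⟨hwΩ, hwr⟩ := hmemθ
  rw [mem_preimage, mem_ball_zero_iff, Complex.norm_eq_abs] at hwr
  have Sym : ∀ θ₁ : ℝ, (ρ:ℂ) * Complex.exp ((θ₁:ℂ) * Complex.I) ∈ Ω →
      ((ρ:ℂ) * Complex.exp (((-θ₁ : ℝ):ℂ) * Complex.I) ∈ Ω ∧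
        Complex.abs (φ ((ρ:ℂ) * Complex.exp (((-θ₁ : ℝ):ℂ) * Complex.I)))
          ≤ Complex.abs (φ ((ρ:ℂ) * Complex.exp ((θ₁:ℂ) * Complex.I)))) := by
    intro θ₁ hθ₁
    have := conj_est _ hθ₁
    rwa [conj_ofReal_mul_exp] at this
  -- Step 1 : move θ to |θ|
  have step1 : (ρ:ℂ) * Complex.exp (((|θ| : ℝ):ℂ) * Complex.I) ∈ Ω ∧
      Complex.abs (φ ((ρ:ℂ) * Complex.exp (((|θ| : ℝ):ℂ) * Complex.I))) < r := by
    rcases le_or_gt 0 θ with hθ0 | hθ0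
    · rw [_root_.abs_of_nonneg hθ0]
      exact ⟨hwΩ, hwr⟩
    · rw [_root_.abs_of_neg hθ0]
      obtain ⟨hm, hle⟩ := Sym θ hwΩ
      exact ⟨hm, lt_of_le_of_lt hle hwr⟩
  -- Step 2 : polarization with α = (|θ| - |θ'|)/2
  set α : ℝ := (|θ| - |θ'|)/2 with hαdef
  have hα0 : 0 ≤ α := by
    have := abs_nonneg θ'
    simp only [hαdef]
    linarith
  have hαπ : α ≤ Real.pi := by
    have h1 : |θ'| ≥ 0 := abs_nonneg θ'
    have := Real.pi_pos
    simp only [hαdef]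
    linarith
  have hpolα := pol_of_circSym hcs hα0 hαπ
  have haunit : Complex.exp ((α:ℂ) * Complex.I) *
      (starRingEnd ℂ) (Complex.exp ((α:ℂ) * Complex.I)) = 1 := by
    rw [conj_exp_ofReal_mul_I, exp_I_add]
    simp
  have hz1b : φ ((ρ:ℂ) * Complex.exp (((|θ| : ℝ):ℂ) * Complex.I)) ∈ ball (0:ℂ) 1 :=
    hmem _ step1.1
  have hfz1 : f (φ ((ρ:ℂ) * Complex.exp (((|θ| : ℝ):ℂ) * Complex.I)))
      = (ρ:ℂ) * Complex.exp (((|θ| : ℝ):ℂ) * Complex.I) := hright _ step1.1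
  have hfar : 0 ≤ ((starRingEnd ℂ) (Complex.exp ((α:ℂ) * Complex.I)) *
      f (φ ((ρ:ℂ) * Complex.exp (((|θ| : ℝ):ℂ) * Complex.I)))).im := by
    rw [hfz1, conj_a_mul_exp, im_ofReal_mul_exp]
    have hsin : 0 ≤ Real.sin (|θ| - α) := by
      apply Real.sin_nonneg_of_nonneg_of_le_pi
      · simp only [hαdef]
        have := abs_nonneg θ
        have := abs_nonneg θ'
        linarith
      · simp only [hαdef]
        have := abs_nonneg θ'
        linarith [hθπ, hθle]
    positivity
  have step2' := polar_step hΩopen hf himg hf0 hφdiff hmem hright hφleft hc hc0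
    haunit hpolα hz1b hfar
  rw [hfz1, sq_exp_mul_conj] at step2'
  have h2αθ : (2*α - |θ| : ℝ) = -|θ'| := by
    simp only [hαdef]; ring
  rw [h2αθ] at step2'
  have step2 : (ρ:ℂ) * Complex.exp (((-|θ'| : ℝ):ℂ) * Complex.I) ∈ Ω ∧
      Complex.abs (φ ((ρ:ℂ) * Complex.exp (((-|θ'| : ℝ):ℂ) * Complex.I))) < r :=
    ⟨step2'.1, lt_of_le_of_lt step2'.2 step1.2⟩
  -- Step 3 : move -|θ'| to θ'
  have step3 : (ρ:ℂ) * Complex.exp ((θ':ℂ) * Complex.I) ∈ Ω ∧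
      Complex.abs (φ ((ρ:ℂ) * Complex.exp ((θ':ℂ) * Complex.I))) < r := by
    rcases le_or_gt 0 θ' with hθ'0 | hθ'0
    · obtain ⟨hm, hle⟩ := Sym (-|θ'|) step2.1
      have h2 := step2.2
      rw [_root_.abs_of_nonneg hθ'0] at hm hle h2
      rw [neg_neg] at hm hle
      exact ⟨hm, lt_of_le_of_lt hle h2⟩
    · rw [show θ' = -|θ'| by rw [_root_.abs_of_neg hθ'0]; ring]
      exact step2
  rw [hchar]
  refine ⟨step3.1, ?_⟩
  rw [mem_preimage, mem_ball_zero_iff, Complex.norm_eq_abs]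
  exact step3.2
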